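/- Let 𝔄 = {0, 1, a_3, …, a_k} with 1 < a_3 < … < a_k, m ∈ N, and Δ𝔄_min = min_{a≠a'∈𝔄}|a−a'|. Then the set Ω_{m,m}^{δ} of m×m mixing matrices ω (nonnegative entries, columns summing to one, strictly increasing row norms) with min(ASB(ω), WSB(ω)) ≥ δ is non-empty for δ = 0.2·Δ𝔄_min/√m. In particular, the matrix ω^δ = I_{m×m} − (2δ√m/(1+m·a_k))·N, where N has N_{ii} = m−i for i < m, N_{mi} = −(m−i) for i < m, and zeros elsewhere, witnesses this. -/

import Mathlib

open Finset Real

namespace MABS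

/-- Euclidean norm of a vector in `ℝ^M`. -/
noncomputable def vnorm {M : ℕ} (v : Fin M → ℝ) : ℝ := Real.sqrt (∑ j, (v j) ^ 2)

/-- Euclidean norm of the `i`-th row of the mixing matrix `ω`. -/
noncomputable def rowNorm {m M : ℕ} (ω : Fin m → Fin M → ℝ) (i : Fin m) : ℝ := vnorm (ω i)

/-- `e` has all its entries in the alphabet `𝔄`. -/
def inAlph (𝔄 : Finset ℝ) {m : ℕ} (e : Fin m → ℝ) : Prop := ∀ i, e i ∈ 𝔄

/-- The mixture `e ω ∈ ℝ^M` of the rows of `ω` with coefficients `e`. -/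
noncomputable def mix {m M : ℕ} (e : Fin m → ℝ) (ω : Fin m → Fin M → ℝ) : Fin M → ℝ :=
  fun j => ∑ i, e i * ω i j

/-- Alphabet separation boundary `ASB(ω) = min_{e ≠ e' ∈ 𝔄^m} ‖eω - e'ω‖ / √M`. -/
noncomputable def ASB (𝔄 : Finset ℝ) {m M : ℕ} (ω : Fin m → Fin M → ℝ) : ℝ :=
  sInf {x : ℝ | ∃ e e' : Fin m → ℝ, inAlph 𝔄 e ∧ inAlph 𝔄 e' ∧ e ≠ e' ∧
    x = vnorm (mix e ω - mix e' ω) / Real.sqrt (M : ℝ)}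

/-- `WSB(ω) ≥ δ`, i.e. every consecutive row-norm gap is at least `2δ√M/(1+m·a_k)`. -/
def WSBge (ak δ : ℝ) {m M : ℕ} (ω : Fin m → Fin M → ℝ) : Prop :=
  ∀ i j : Fin m, (j : ℕ) = (i : ℕ) + 1 →
    δ ≤ ((1 + (m : ℝ) * ak) / (2 * Real.sqrt (M : ℝ))) * (rowNorm ω j - rowNorm ω i)

/-- Weights separation boundary as a real number. -/
noncomputable def WSBval (ak : ℝ) {m M : ℕ} (ω : Fin m → Fin M → ℝ) : ℝ :=
  ((1 + (m : ℝ) * ak) / (2 * Real.sqrt (M : ℝ))) *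
    sInf {x : ℝ | ∃ i j : Fin m, (j : ℕ) = (i : ℕ) + 1 ∧ x = rowNorm ω j - rowNorm ω i}

/-- `ω ∈ Ω_{m,M}`: nonnegative entries, columns summing to one, strictly increasing
positive row norms. -/
def Omega {m M : ℕ} (ω : Fin m → Fin M → ℝ) : Prop :=
  (∀ i j, 0 ≤ ω i j) ∧ (∀ j, ∑ i, ω i j = 1) ∧
    (∀ i, 0 < rowNorm ω i) ∧ StrictMono (rowNorm ω)

/-- The alphabet `𝔄 = {0, 1, a₃, …, a_k}` with `1 < a₃ < … < a_k`: it contains `0` and `1`,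
`ak` is its maximal element, and every nonzero element is at least `1`. -/
def AlphOK (𝔄 : Finset ℝ) (ak : ℝ) : Prop :=
  (0 : ℝ) ∈ 𝔄 ∧ (1 : ℝ) ∈ 𝔄 ∧ ak ∈ 𝔄 ∧ (∀ x ∈ 𝔄, x ≤ ak) ∧ (∀ x ∈ 𝔄, x = 0 ∨ 1 ≤ x)

/-- `Δ𝔄_min`, the minimal distance between distinct alphabet values. -/
noncomputable def DeltaMin (𝔄 : Finset ℝ) : ℝ :=
  sInf {x : ℝ | ∃ a ∈ 𝔄, ∃ b ∈ 𝔄, a ≠ b ∧ x = |a - b|}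

/-- The `i`-th standard unit (row) vector in `ℝ^m`. -/
def unitRow {m : ℕ} (i : Fin m) : Fin m → ℝ := fun i' => if i' = i then 1 else 0

/-- `F = ΠA` is a separable finite-alphabet design: every row lies in `𝔄^m` and every
standard unit vector occurs among the rows. -/
def Separable (𝔄 : Finset ℝ) {n m : ℕ} (F : Fin n → Fin m → ℝ) : Prop :=
  (∀ j, inAlph 𝔄 (F j)) ∧ ∀ i : Fin m, ∃ j, F j = unitRow i

end MABS


namespace MABS

lemma deltaSet_finite (𝔄 : Finset ℝ) :
    {x : ℝ | ∃ a ∈ 𝔄, ∃ b ∈ 𝔄, a ≠ b ∧ x = |a - b|}.Finite := by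
  apply Set.Finite.subset ((((𝔄 ×ˢ 𝔄).image fun p => |p.1 - p.2|) : Finset ℝ) : Set ℝ).toFinite
  rintro x ⟨a, ha, b, hb, hab, rfl⟩
  simp only [Finset.coe_image, Set.mem_image, Finset.mem_coe, Finset.mem_product]
  exact ⟨(a, b), ⟨ha, hb⟩, rfl⟩

lemma deltaSet_nonempty {𝔄 : Finset ℝ} {ak : ℝ} (hA : AlphOK 𝔄 ak) :
    {x : ℝ | ∃ a ∈ 𝔄, ∃ b ∈ 𝔄, a ≠ b ∧ x = |a - b|}.Nonempty :=
  ⟨1, 0, hA.1, 1, hA.2.1, by norm_num⟩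

lemma deltaSet_bdd (𝔄 : Finset ℝ) :
    BddBelow {x : ℝ | ∃ a ∈ 𝔄, ∃ b ∈ 𝔄, a ≠ b ∧ x = |a - b|} :=
  ⟨0, by rintro x ⟨a, _, b, _, _, rfl⟩; positivity⟩

lemma DeltaMin_le {𝔄 : Finset ℝ} {a b : ℝ} (ha : a ∈ 𝔄) (hb : b ∈ 𝔄) (hab : a ≠ b) :
    DeltaMin 𝔄 ≤ |a - b| :=
  csInf_le (deltaSet_bdd 𝔄) ⟨a, ha, b, hb, hab, rfl⟩

lemma DeltaMin_le_one {𝔄 : Finset ℝ} {ak : ℝ} (hA : AlphOK 𝔄 ak) : DeltaMin 𝔄 ≤ 1 := by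
  have := DeltaMin_le hA.1 hA.2.1 (by norm_num)
  simpa using this

lemma DeltaMin_pos {𝔄 : Finset ℝ} {ak : ℝ} (hA : AlphOK 𝔄 ak) : 0 < DeltaMin 𝔄 := by
  have hmem := (deltaSet_nonempty hA).csInf_mem (deltaSet_finite 𝔄)
  obtain ⟨a, _, b, _, hab, h⟩ := hmem
  rw [DeltaMin, h]
  exact abs_sub_pos.mpr hab

lemma ak_ge_one {𝔄 : Finset ℝ} {ak : ℝ} (hA : AlphOK 𝔄 ak) : 1 ≤ ak :=
  hA.2.2.2.1 1 hA.2.1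

lemma abs_le_vnorm {M : ℕ} (v : Fin M → ℝ) (j : Fin M) : |v j| ≤ vnorm v := by
  rw [vnorm, ← Real.sqrt_sq_eq_abs]
  apply Real.sqrt_le_sqrt
  exact Finset.single_le_sum (fun i _ => sq_nonneg (v i)) (Finset.mem_univ j)

end MABS

/-- For `δ = 0.2·Δ𝔄_min/√m`, the explicit matrix
`ω^δ = I_{m×m} - (2δ√m/(1+m·a_k))·N` (with `N` having diagonal entries `m-i` for `i < m`,
last-row entries `-(m-i)` for `i < m`, zeros elsewhere) lies in `Ω_{m,m}` and satisfies
`ASB(ω^δ) ≥ δ` and `WSB(ω^δ) ≥ δ`; in particular `Ω_{m,m}^δ` is non-empty. -/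
theorem stmt6 {m : ℕ} (hm : 0 < m) (𝔄 : Finset ℝ) (ak : ℝ) (hA : MABS.AlphOK 𝔄 ak) :
    let δ : ℝ := 0.2 * MABS.DeltaMin 𝔄 / Real.sqrt (m : ℝ)
    let c : ℝ := 2 * δ * Real.sqrt (m : ℝ) / (1 + (m : ℝ) * ak)
    let N : Fin m → Fin m → ℝ := fun i j =>
      if (i : ℕ) = (j : ℕ) ∧ (j : ℕ) < m - 1 then (m : ℝ) - 1 - ((j : ℕ) : ℝ)
      else if (i : ℕ) = m - 1 ∧ (j : ℕ) < m - 1 then -((m : ℝ) - 1 - ((j : ℕ) : ℝ))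
      else 0
    let ω : Fin m → Fin m → ℝ := fun i j => (if i = j then 1 else 0) - c * N i j
    MABS.Omega ω ∧ δ ≤ MABS.ASB 𝔄 ω ∧ MABS.WSBge ak δ ω := by
  intro δ c N ω
  obtain ⟨h0A, h1A, hakA, hmax, hone⟩ := hA
  have hA' : MABS.AlphOK 𝔄 ak := ⟨h0A, h1A, hakA, hmax, hone⟩
  set Δ := MABS.DeltaMin 𝔄 with hΔdef
  have hΔpos : 0 < Δ := MABS.DeltaMin_pos hA'
  have hΔ1 : Δ ≤ 1 := MABS.DeltaMin_le_one hA'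
  have hak : 1 ≤ ak := MABS.ak_ge_one hA'
  have hm1 : (1:ℝ) ≤ (m:ℝ) := by exact_mod_cast hm
  have hsm : (0:ℝ) < Real.sqrt (m:ℝ) := Real.sqrt_pos.mpr (by linarith)
  have hden : (0:ℝ) < 1 + (m:ℝ) * ak := by nlinarith
  have hδdef : δ = 0.2 * Δ / Real.sqrt (m:ℝ) := rfl
  have hceq : c = 0.4 * Δ / (1 + (m:ℝ) * ak) := by
    show 2 * (0.2 * Δ / Real.sqrt (m:ℝ)) * Real.sqrt (m:ℝ) / (1 + (m:ℝ)*ak) = _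
    field_simp
    ring
  have hcpos : 0 < c := by rw [hceq]; positivity
  have hcast : ((m - 1 : ℕ) : ℝ) = (m:ℝ) - 1 := by
    rw [Nat.cast_sub hm]; simp
  have hkey : ∀ i : Fin m, 0 ≤ c * ((m:ℝ) - 1 - ((i:ℕ):ℝ)) ∧
      c * ((m:ℝ) - 1 - ((i:ℕ):ℝ)) ≤ 0.4 := by
    intro i
    have hin : (i:ℕ) ≤ m - 1 := by omega
    have hi : ((i:ℕ):ℝ) ≤ (m:ℝ) - 1 := by
      rw [← hcast]; exact_mod_cast hin
    have hi0 : (0:ℝ) ≤ ((i:ℕ):ℝ) := Nat.cast_nonneg _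
    constructor
    · exact mul_nonneg hcpos.le (by linarith)
    · rw [hceq, div_mul_eq_mul_div, div_le_iff₀ hden]
      nlinarith [mul_nonneg (sub_nonneg.mpr hΔ1) (show (0:ℝ) ≤ (m:ℝ) - 1 - ((i:ℕ):ℝ) by linarith),
        mul_nonneg (sub_nonneg.mpr hak) (show (0:ℝ) ≤ (m:ℝ) by linarith)]
  -- entry formula
  have hω : ∀ i j : Fin m, ω i j =
      if (i:ℕ) = (j:ℕ) ∧ (i:ℕ) < m - 1 then 1 - c * ((m:ℝ) - 1 - ((j:ℕ):ℝ))
      else if (i:ℕ) = (j:ℕ) then 1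
      else if (i:ℕ) = m - 1 ∧ (j:ℕ) < m - 1 then c * ((m:ℝ) - 1 - ((j:ℕ):ℝ))
      else 0 := by
    intro i j
    show (if i = j then (1:ℝ) else 0) - c * N i j = _
    have hN : N i j = if (i:ℕ) = (j:ℕ) ∧ (j:ℕ) < m - 1 then (m:ℝ) - 1 - ((j:ℕ):ℝ)
        else if (i:ℕ) = m - 1 ∧ (j:ℕ) < m - 1 then -((m:ℝ) - 1 - ((j:ℕ):ℝ)) else 0 := rfl
    rw [hN]
    simp only [Fin.ext_iff]
    split_ifs <;> first
      | ring1
      | (exfalso; omega)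
  clear_value δ c N ω
  have hrowvec : ∀ i : Fin m, (i:ℕ) < m - 1 → ∀ j,
      ω i j = if j = i then 1 - c * ((m:ℝ) - 1 - ((i:ℕ):ℝ)) else 0 := by
    intro i hi j
    rw [hω i j]
    by_cases hji : j = i
    · subst hji; simp [hi]
    · have h1 : (i:ℕ) ≠ (j:ℕ) := fun h => hji (Fin.ext h.symm)
      have h2 : ¬((i:ℕ) = m - 1) := by omega
      simp [h1, h2, hji]
  have hωdiag_last : ∀ i : Fin m, (i:ℕ) = m - 1 → ω i i = 1 := by
    intro i hi
    rw [hω i i]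
    simp [hi]
  have hωlast_col : ∀ i : Fin m, (i:ℕ) ≠ m - 1 → ∀ j : Fin m, (j:ℕ) = m - 1 → ω i j = 0 := by
    intro i hi j hj
    rw [hω i j]
    have h1 : (i:ℕ) ≠ (j:ℕ) := by omega
    simp [h1, hi]
  have hrow1 : ∀ i : Fin m, (i:ℕ) < m - 1 →
      MABS.rowNorm ω i = 1 - c * ((m:ℝ) - 1 - ((i:ℕ):ℝ)) := by
    intro i hi
    have hA0 : 0 ≤ 1 - c * ((m:ℝ) - 1 - ((i:ℕ):ℝ)) := by linarith [(hkey i).2]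
    rw [MABS.rowNorm, MABS.vnorm]
    have hsq : ∀ j, (ω i j)^2 =
        if j = i then (1 - c * ((m:ℝ) - 1 - ((i:ℕ):ℝ)))^2 else 0 := by
      intro j; rw [hrowvec i hi j]; split_ifs <;> simp
    rw [Finset.sum_congr rfl (fun j _ => hsq j)]
    simp only [Finset.sum_ite_eq', Finset.mem_univ, if_pos]
    exact Real.sqrt_sq hA0
  have hrowlast : ∀ i : Fin m, (i:ℕ) = m - 1 → 1 ≤ MABS.rowNorm ω i := by
    intro i hi
    rw [MABS.rowNorm, MABS.vnorm]
    have h1 : (1:ℝ) ≤ ∑ j, (ω i j)^2 :=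
      calc (1:ℝ) = (ω i i)^2 := by rw [hωdiag_last i hi]; norm_num
        _ ≤ ∑ j, (ω i j)^2 :=
          Finset.single_le_sum (f := fun j => (ω i j)^2)
            (fun j _ => sq_nonneg _) (Finset.mem_univ i)
    calc (1:ℝ) = Real.sqrt 1 := Real.sqrt_one.symm
      _ ≤ _ := Real.sqrt_le_sqrt h1
  have hrowpos : ∀ i, 0 < MABS.rowNorm ω i := by
    intro i
    by_cases hi : (i:ℕ) < m - 1
    · rw [hrow1 i hi]; linarith [(hkey i).2]
    · have := hrowlast i (by omega); linarith
  refine ⟨⟨?_, ?_, hrowpos, ?_⟩, ?_, ?_⟩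
  · -- nonneg entries
    intro i j
    rw [hω i j]
    split_ifs with h1 h2 h3
    · linarith [(hkey j).2]
    · norm_num
    · exact (hkey j).1
    · exact le_rfl
  · -- column sums
    intro j
    by_cases hj : (j:ℕ) < m - 1
    · have hlt : m - 1 < m := by omega
      set lastI : Fin m := ⟨m - 1, hlt⟩ with hlastI
      have hne : j ≠ lastI := by
        intro h; rw [h] at hj; simp [hlastI] at hj
      have hsub : ∑ i, ω i j = ∑ i ∈ ({j, lastI} : Finset (Fin m)), ω i j := by
        symm
        apply Finset.sum_subset (Finset.subset_univ _)
        intro i _ hi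
        simp only [Finset.mem_insert, Finset.mem_singleton, not_or] at hi
        rw [hω i j]
        have h1 : (i:ℕ) ≠ (j:ℕ) := fun h => hi.1 (Fin.ext h)
        have h2 : (i:ℕ) ≠ m - 1 := fun h => hi.2 (Fin.ext h)
        simp [h1, h2]
      have e1 : ω j j = 1 - c * ((m:ℝ) - 1 - ((j:ℕ):ℝ)) := by
        rw [hrowvec j hj j, if_pos rfl]
      have e2 : ω lastI j = c * ((m:ℝ) - 1 - ((j:ℕ):ℝ)) := by
        rw [hω lastI j]
        have h1 : (lastI:ℕ) ≠ (j:ℕ) := by simp only [hlastI]; omega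
        have h2 : (lastI:ℕ) = m - 1 := rfl
        simp [h1, hj, h2]
        exact fun h => absurd h (by omega)
      rw [hsub, Finset.sum_pair hne, e1, e2]
      ring
    · have hj' : (j:ℕ) = m - 1 := by omega
      have hvals : ∀ i, ω i j = if i = j then 1 else 0 := by
        intro i
        by_cases h : i = j
        · subst h; rw [if_pos rfl]; exact hωdiag_last i hj'
        · rw [if_neg h]
          exact hωlast_col i (fun hh => h (Fin.ext (by omega))) j hj'
      rw [Finset.sum_congr rfl (fun i _ => hvals i)]
      simp
  · -- strict mono
    intro a b hab
    have hab' : (a:ℕ) < (b:ℕ) := hab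
    by_cases hbl : (b:ℕ) < m - 1
    · have ha : (a:ℕ) < m - 1 := by omega
      rw [hrow1 a ha, hrow1 b hbl]
      have hcst : ((a:ℕ):ℝ) < ((b:ℕ):ℝ) := by exact_mod_cast hab'
      nlinarith [hcpos]
    · have hbeq : (b:ℕ) = m - 1 := by omega
      have ha : (a:ℕ) < m - 1 := by omega
      rw [hrow1 a ha]
      have h1 := hrowlast b hbeq
      have h2 : ((a:ℕ):ℝ) < (m:ℝ) - 1 := by rw [← hcast]; exact_mod_cast ha
      have h3 : 0 < c * ((m:ℝ) - 1 - ((a:ℕ):ℝ)) := mul_pos hcpos (by linarith)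
      linarith
  · -- ASB
    have hlt : m - 1 < m := by omega
    set lastI : Fin m := ⟨m - 1, hlt⟩ with hlastI
    apply le_csInf
    · refine ⟨_, (fun _ => (0:ℝ)), (fun i => if i = (⟨0, hm⟩ : Fin m) then 1 else 0),
        fun _ => h0A, fun i => ?_, ?_, rfl⟩
      · dsimp only; split_ifs
        · exact h1A
        · exact h0A
      · intro h
        have := congrFun h ⟨0, hm⟩
        simp at this
    · rintro x ⟨e, e', he, he', hne, rfl⟩
      have hmix : ∀ j, (MABS.mix e ω - MABS.mix e' ω) j = ∑ i, (e i - e' i) * ω i j := by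
        intro j
        simp only [Pi.sub_apply, MABS.mix, ← Finset.sum_sub_distrib]
        exact Finset.sum_congr rfl fun i _ => by ring
      suffices h : 0.2 * Δ ≤ MABS.vnorm (MABS.mix e ω - MABS.mix e' ω) by
        rw [hδdef]
        exact (div_le_div_iff_of_pos_right hsm).mpr h
      by_cases hlast : e lastI ≠ e' lastI
      · have hval : (MABS.mix e ω - MABS.mix e' ω) lastI = e lastI - e' lastI := by
          rw [hmix, Finset.sum_eq_single lastI]
          · rw [hωdiag_last lastI rfl]; ring
          · intro b _ hb
            rw [hωlast_col b (fun h => hb (Fin.ext h)) lastI rfl]; ring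
          · intro h; exact absurd (Finset.mem_univ _) h
        have h1 : Δ ≤ |e lastI - e' lastI| := MABS.DeltaMin_le (he _) (he' _) hlast
        have h2 := MABS.abs_le_vnorm (MABS.mix e ω - MABS.mix e' ω) lastI
        rw [hval] at h2
        linarith
      · push_neg at hlast
        obtain ⟨i0, hi0⟩ := Function.ne_iff.mp hne
        have hi0ne : i0 ≠ lastI := by
          intro h; rw [h] at hi0; exact hi0 hlast
        have hi0l : (i0:ℕ) < m - 1 := by
          have := i0.isLt
          have : (i0:ℕ) ≠ m - 1 := fun h => hi0ne (Fin.ext h)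
          omega
        have hval : (MABS.mix e ω - MABS.mix e' ω) i0
            = (e i0 - e' i0) * (1 - c * ((m:ℝ) - 1 - ((i0:ℕ):ℝ))) := by
          rw [hmix, Finset.sum_eq_single i0]
          · rw [hrowvec i0 hi0l i0, if_pos rfl]
          · intro b _ hb
            by_cases hbl : (b:ℕ) = m - 1
            · have hbL : b = lastI := Fin.ext hbl
              rw [hbL, hlast]; ring
            · rw [hrowvec b (by omega) i0, if_neg (fun h => hb h.symm)]; ring
          · intro h; exact absurd (Finset.mem_univ _) h
        have h1 : Δ ≤ |e i0 - e' i0| := MABS.DeltaMin_le (he _) (he' _) hi0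
        have h2 := MABS.abs_le_vnorm (MABS.mix e ω - MABS.mix e' ω) i0
        rw [hval, abs_mul] at h2
        have h3 : 0.6 ≤ |1 - c * ((m:ℝ) - 1 - ((i0:ℕ):ℝ))| := by
          rw [abs_of_nonneg (by linarith [(hkey i0).2])]
          linarith [(hkey i0).2]
        have h4 : Δ * 0.6 ≤ |e i0 - e' i0| * |1 - c * ((m:ℝ) - 1 - ((i0:ℕ):ℝ))| :=
          mul_le_mul h1 h3 (by norm_num) (abs_nonneg _)
        linarith
  · -- WSB
    intro i j hji
    by_cases hjl : (j:ℕ) < m - 1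
    · have hil : (i:ℕ) < m - 1 := by omega
      rw [hrow1 j hjl, hrow1 i hil]
      have hji' : ((j:ℕ):ℝ) = ((i:ℕ):ℝ) + 1 := by exact_mod_cast hji
      have hgap : (1 - c * ((m:ℝ) - 1 - ((j:ℕ):ℝ)))
          - (1 - c * ((m:ℝ) - 1 - ((i:ℕ):ℝ))) = c := by rw [hji']; ring
      rw [hgap, hδdef, hceq]
      apply le_of_eq
      field_simp
      ring
    · have hjeq : (j:ℕ) = m - 1 := by omega
      have hil : (i:ℕ) < m - 1 := by omega
      rw [hrow1 i hil]
      have h1 := hrowlast j hjeq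
      have hi' : (m:ℝ) - 1 - ((i:ℕ):ℝ) = 1 := by
        have h2 : (i:ℕ) + 2 = m := by omega
        have h3 := congrArg (Nat.cast : ℕ → ℝ) h2
        push_cast at h3
        linarith
      have hgap : c ≤ MABS.rowNorm ω j - (1 - c * ((m:ℝ) - 1 - ((i:ℕ):ℝ))) := by
        rw [hi']; linarith
      have hcoef : 0 < (1 + (m:ℝ) * ak) / (2 * Real.sqrt (m:ℝ)) := by positivity
      calc δ = (1 + (m:ℝ) * ak) / (2 * Real.sqrt (m:ℝ)) * c := by
            rw [hδdef, hceq]; field_simp; ring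
        _ ≤ _ := mul_le_mul_of_nonneg_left hgap hcoef.le
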